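/- Let a_1 < a_2 < ... < a_n be integers, e ≥ 2, t_i = ⌈a_i/e⌉. Suppose 1 ≤ s ≤ r ≤ n with a_{s-1} < a_r − e < a_s, and let a' = (a_1,...,a_{s-1}, a_r − e, a_s,...,a_{r-1}, a_{r+1},...,a_n), with t'_i = ⌈a'_i/e⌉. Let u be the least index with t_u = t_r. Then (t'_1,...,t'_n) = (t_1,...,t_n) − ε_u, where ε_u is the u-th standard basis vector. -/
import Mathlib


set_option maxHeartbeats 1000000 in
/-- Let `a₁ < a₂ < ... < aₙ` be integers, `e ≥ 2`, `tᵢ = ⌈aᵢ/e⌉`.  Suppose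
`1 ≤ s ≤ r ≤ n` with `a_{s-1} < a_r − e < a_s`, let
`a' = (a₁,...,a_{s-1}, a_r − e, a_s,...,a_{r-1}, a_{r+1},...,aₙ)` and `t'ᵢ = ⌈a'ᵢ/e⌉`.
If `u` is the least index with `t_u = t_r`, then `t' = t − ε_u`. -/
theorem ceil_after_move (n e : ℕ) (he : 2 ≤ e) (a a' t t' : ℕ → ℤ) (s r u : ℕ)
    (hmono : ∀ i j : ℕ, 1 ≤ i → i < j → j ≤ n → a i < a j)
    (ht : ∀ i : ℕ, 1 ≤ i → i ≤ n → -(e : ℤ) < a i - e * t i ∧ a i - e * t i ≤ 0)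
    (ht' : ∀ i : ℕ, 1 ≤ i → i ≤ n → -(e : ℤ) < a' i - e * t' i ∧ a' i - e * t' i ≤ 0)
    (hs : 1 ≤ s) (hsr : s ≤ r) (hrn : r ≤ n)
    (hlt : ∀ k : ℕ, 1 ≤ k → k < s → a k < a r - e)
    (hgt : a r - (e : ℤ) < a s)
    (ha'1 : ∀ k : ℕ, 1 ≤ k → k < s → a' k = a k)
    (ha's : a' s = a r - e)
    (ha'2 : ∀ k : ℕ, s < k → k ≤ r → a' k = a (k - 1))
    (ha'3 : ∀ k : ℕ, r < k → k ≤ n → a' k = a k)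
    (hu1 : 1 ≤ u) (hun : u ≤ n) (hu : t u = t r)
    (hleast : ∀ k : ℕ, 1 ≤ k → k ≤ n → t k = t r → u ≤ k) :
    ∀ k : ℕ, 1 ≤ k → k ≤ n → t' k = t k - (if k = u then 1 else 0) := by
  have hE : (2:ℤ) ≤ (e:ℤ) := by exact_mod_cast he
  have hEpos : (0:ℤ) < (e:ℤ) := by linarith
  -- uniqueness
  have huniq : ∀ x t1 t2 : ℤ, -(e:ℤ) < x - e*t1 → x - e*t1 ≤ 0 →
      -(e:ℤ) < x - e*t2 → x - e*t2 ≤ 0 → t1 = t2 := by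
    intro x t1 t2 h1 h2 h3 h4
    have h5 : t2 < t1 + 1 := by
      have : (e:ℤ) * t2 < e * (t1 + 1) := by linarith
      exact lt_of_mul_lt_mul_left this (le_of_lt hEpos)
    have h6 : t1 < t2 + 1 := by
      have : (e:ℤ) * t1 < e * (t2 + 1) := by linarith
      exact lt_of_mul_lt_mul_left this (le_of_lt hEpos)
    omega
  -- monotonicity of t
  have tmono : ∀ i j : ℕ, 1 ≤ i → i < j → j ≤ n → t i ≤ t j := by
    intro i j hi hij hj
    by_contra hcon
    push_neg at hcon
    have hij' : t j + 1 ≤ t i := hcon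
    have hi' := ht i hi (by omega)
    have hj' := ht j (by omega) hj
    have haij := hmono i j hi hij hj
    have : (e:ℤ) * (t j + 1) ≤ e * (t i) := by
      exact mul_le_mul_of_nonneg_left (by exact_mod_cast hij') (le_of_lt hEpos)
    nlinarith [hi'.1, hi'.2, hj'.1, hj'.2]
  have tmono' : ∀ i j : ℕ, 1 ≤ i → i ≤ j → j ≤ n → t i ≤ t j := by
    intro i j hi hij hj
    rcases eq_or_lt_of_le hij with h | h
    · rw [h]
    · exact tmono i j hi h hj
  have hr1 : 1 ≤ r := le_trans hs hsr
  have hur : u ≤ r := hleast r hr1 hrn rfl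
  have htr := ht r hr1 hrn
  -- t k < t r for k < s
  have hklt : ∀ k : ℕ, 1 ≤ k → k < s → t k < t r := by
    intro k hk1 hks
    by_contra hcon
    push_neg at hcon
    have htk := ht k hk1 (by omega)
    have hak := hlt k hk1 hks
    have : (e:ℤ) * (t r) ≤ e * (t k) := by
      exact mul_le_mul_of_nonneg_left (by exact_mod_cast hcon) (le_of_lt hEpos)
    nlinarith [htk.1, htk.2, htr.1, htr.2]
  have hsu : s ≤ u := by
    by_contra hcon
    push_neg at hcon
    have := hklt u hu1 hcon
    omega
  -- t s ≥ t r - 1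
  have htsge : t r - 1 ≤ t s := by
    have hts := ht s hs (by omega)
    by_contra hcon
    push_neg at hcon
    have : t s + 1 ≤ t r - 1 := by omega
    have : (e:ℤ) * (t s + 1) ≤ e * (t r - 1) := by
      exact mul_le_mul_of_nonneg_left (by exact_mod_cast this) (le_of_lt hEpos)
    nlinarith [hts.1, hts.2, htr.1, htr.2]
  -- values of t on [s, r]
  have tval : ∀ j : ℕ, s ≤ j → j ≤ r → t j = if j < u then t r - 1 else t r := by
    intro j hsj hjr
    by_cases hju : j < u
    · rw [if_pos hju]
      have h1 : t j ≤ t r := tmono' j r (by omega) hjr hrn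
      have h2 : t j ≠ t r := by
        intro h; exact absurd (hleast j (by omega) (by omega) h) (by omega)
      have h3 : t s ≤ t j := tmono' s j hs hsj (by omega)
      omega
    · rw [if_neg hju]
      push_neg at hju
      have h1 : t u ≤ t j := tmono' u j hu1 hju (by omega)
      have h2 : t j ≤ t r := tmono' j r (by omega) hjr hrn
      omega
  intro k hk1 hkn
  by_cases hks : k < s
  · -- k < s : t' k = t k, k ≠ u
    have hne : k ≠ u := by omega
    rw [if_neg hne]
    have h1 := ht' k hk1 hkn
    have h2 := ht k hk1 hkn
    rw [ha'1 k hk1 hks] at h1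
    have := huniq (a k) (t' k) (t k) h1.1 h1.2 h2.1 h2.2
    omega
  · push_neg at hks
    by_cases hkse : k = s
    · -- k = s : t' s = t r - 1
      subst hkse
      have h1 := ht' k hs (by omega)
      rw [ha's] at h1
      have h2 : -(e:ℤ) < (a r - e) - e * (t r - 1) ∧ (a r - e) - e * (t r - 1) ≤ 0 := by
        constructor <;> [nlinarith [htr.1]; nlinarith [htr.2]]
      have heq : t' k = t r - 1 := huniq (a r - e) (t' k) (t r - 1) h1.1 h1.2 h2.1 h2.2
      by_cases hku : k = u
      · rw [if_pos hku]
        have hv := tval k le_rfl hsr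
        rw [if_neg (by omega)] at hv
        omega
      · rw [if_neg hku]
        have := tval k le_rfl hsr
        rw [if_pos (by omega)] at this
        omega
    · by_cases hkr : k ≤ r
      · -- s < k ≤ r : t' k = t (k-1)
        have hsk : s < k := by omega
        have h1 := ht' k hk1 hkn
        rw [ha'2 k hsk hkr] at h1
        have h2 := ht (k-1) (by omega) (by omega)
        have heq : t' k = t (k-1) := huniq (a (k-1)) (t' k) (t (k-1)) h1.1 h1.2 h2.1 h2.2
        have hv1 := tval (k-1) (by omega) (by omega)
        have hv2 := tval k (by omega) hkr
        by_cases hku : k = u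
        · rw [if_pos hku]
          rw [if_pos (by omega)] at hv1
          rw [if_neg (by omega)] at hv2
          omega
        · rw [if_neg hku]
          by_cases hku2 : k < u
          · rw [if_pos (by omega)] at hv1
            rw [if_pos hku2] at hv2
            omega
          · rw [if_neg (by omega)] at hv1
            rw [if_neg hku2] at hv2
            omega
      · -- r < k : t' k = t k, k ≠ u
        push_neg at hkr
        have hne : k ≠ u := by omega
        rw [if_neg hne]
        have h1 := ht' k hk1 hkn
        rw [ha'3 k hkr hkn] at h1
        have h2 := ht k hk1 hkn
        have := huniq (a k) (t' k) (t k) h1.1 h1.2 h2.1 h2.2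
        omega
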